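/- Let h : ℝ → ℝ be twice differentiable with |h(x)| ≤ M₀, |h'(x)| ≤ M₁ and |h''(x)| ≤ M₂ for all x, so that h' is Lipschitz with constant L_{h'} = M₂ and the map H(x₁,x₂) = h(x₁)h'(x₂) has gradient bounded by some constant L_{hh'}. Fix data (u^i, v^i) ∈ ℝ^d × ℝ, i = 1,…,N, and θ ∈ ℝ^d, and let f(W,θ) = (1/(2N)) ∑_{i=1}^N (v^i − θ^T h(W u^i))². Then for all W₁, W₂ ∈ ℝ^{d×d}, ‖∇_W f(W₁,θ) − ∇_W f(W₂,θ)‖_F ≤ L·‖W₁ − W₂‖_F, where L = (1/N)·(max_j |θ[j]|)·( L_{h'}·∑_{i=1}^N ‖u^i‖₂²·|v^i| + √(2d)·L_{hh'}·‖θ‖₂·∑_{i=1}^N ‖u^i‖₂² ). -/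

import Mathlib

open Matrix MeasureTheory

/-- Frobenius norm of a real matrix. -/
noncomputable def frobNorm {m n : ℕ} (A : Matrix (Fin m) (Fin n) ℝ) : ℝ :=
  Real.sqrt (∑ j, ∑ k, (A j k) ^ 2)

/-- Euclidean norm of a vector in ℝ^n. -/
noncomputable def vecNorm {n : ℕ} (x : Fin n → ℝ) : ℝ :=
  Real.sqrt (∑ j, (x j) ^ 2)

/-- Gradient of the two-layer objective `f(W,θ) = (1/(2N)) ∑ᵢ (vⁱ − θᵀ h(W uⁱ))²`
with respect to the hidden layer `W`. -/
noncomputable def gradW {d N : ℕ} (h : ℝ → ℝ) (u : Fin N → Fin d → ℝ) (v : Fin N → ℝ)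
    (W : Matrix (Fin d) (Fin d) ℝ) (θ : Fin d → ℝ) : Matrix (Fin d) (Fin d) ℝ :=
  Matrix.of fun j k => (-(1 : ℝ) / N) * ∑ i,
    (v i - ∑ j', θ j' * h ((W *ᵥ u i) j')) * deriv h ((W *ᵥ u i) j) * θ j * u i k

lemma minkowski_fin {ι κ : Type*} [Fintype ι] [Fintype κ] (x : ι → κ → ℝ) :
    Real.sqrt (∑ j, (∑ i, x i j) ^ 2) ≤ ∑ i, Real.sqrt (∑ j, (x i j) ^ 2) := by
  classical
  let e : ι → EuclideanSpace ℝ κ := fun i => WithLp.toLp 2 (fun j => x i j : κ → ℝ)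
  have h1 : Real.sqrt (∑ j, (∑ i, x i j) ^ 2) = ‖∑ i, e i‖ := by
    rw [EuclideanSpace.norm_eq]
    congr 1
    refine Finset.sum_congr rfl fun j _ => ?_
    have : (∑ i, e i) j = ∑ i, x i j := by simp [e]
    rw [this, Real.norm_eq_abs, sq_abs]
  have h2 : ∀ i, ‖e i‖ = Real.sqrt (∑ j, (x i j) ^ 2) := by
    intro i
    rw [EuclideanSpace.norm_eq]
    congr 1
    refine Finset.sum_congr rfl fun j _ => ?_
    rw [Real.norm_eq_abs, sq_abs]
  calc Real.sqrt (∑ j, (∑ i, x i j) ^ 2) = ‖∑ i, e i‖ := h1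
    _ ≤ ∑ i, ‖e i‖ := norm_sum_le _ _
    _ = _ := by simp [h2]

section
variable (h : ℝ → ℝ) (hd1 : Differentiable ℝ h) (hd2 : Differentiable ℝ (deriv h))
  (M₂ Lhh : ℝ) (hb2 : ∀ x, |deriv (deriv h) x| ≤ M₂)
  (hLhh : ∀ x₁ x₂ : ℝ,
      Real.sqrt ((deriv h x₁ * deriv h x₂) ^ 2 + (h x₁ * deriv (deriv h) x₂) ^ 2) ≤ Lhh)

include hd2 hb2 in
lemma lip_h' : ∀ a b : ℝ, |deriv h a - deriv h b| ≤ M₂ * |a - b| := by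
  intro a b
  have := Convex.norm_image_sub_le_of_norm_deriv_le (f := deriv h) (s := Set.univ)
    (fun x _ => hd2 x) (fun x _ => by simpa [Real.norm_eq_abs] using hb2 x)
    convex_univ (Set.mem_univ b) (Set.mem_univ a)
  simpa [Real.norm_eq_abs] using this

include hd1 hd2 hLhh in
lemma lip_H : ∀ x₁ y₁ x₂ y₂ : ℝ,
    |h x₁ * deriv h y₁ - h x₂ * deriv h y₂| ≤
      Lhh * Real.sqrt ((x₁ - x₂) ^ 2 + (y₁ - y₂) ^ 2) := by
  intro x₁ y₁ x₂ y₂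
  set dx := x₁ - x₂ with hdx
  set dy := y₁ - y₂ with hdy
  set φ : ℝ → ℝ := fun t => h (x₂ + t * dx) * deriv h (y₂ + t * dy) with hφ
  have hX : ∀ t : ℝ, HasDerivAt (fun t : ℝ => x₂ + t * dx) dx t := fun t =>
    (hasDerivAt_mul_const dx).const_add x₂
  have hY : ∀ t : ℝ, HasDerivAt (fun t : ℝ => y₂ + t * dy) dy t := fun t =>
    (hasDerivAt_mul_const dy).const_add y₂
  have hφ' : ∀ t : ℝ, HasDerivAt φ
      ((deriv h (x₂ + t * dx) * dx) * deriv h (y₂ + t * dy) +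
        h (x₂ + t * dx) * (deriv (deriv h) (y₂ + t * dy) * dy)) t := by
    intro t
    exact (((hd1 _).hasDerivAt.comp t (hX t)).mul
      ((hd2 _).hasDerivAt.comp t (hY t)))
  have hLnn : 0 ≤ Lhh := le_trans (Real.sqrt_nonneg _) (hLhh 0 0)
  have hbound : ∀ t : ℝ, |deriv φ t| ≤ Lhh * Real.sqrt (dx ^ 2 + dy ^ 2) := by
    intro t
    rw [(hφ' t).deriv]
    set A := deriv h (x₂ + t * dx) * deriv h (y₂ + t * dy) with hA
    set B := h (x₂ + t * dx) * deriv (deriv h) (y₂ + t * dy) with hB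
    have h1 : deriv h (x₂ + t * dx) * dx * deriv h (y₂ + t * dy) +
        h (x₂ + t * dx) * (deriv (deriv h) (y₂ + t * dy) * dy) = A * dx + B * dy := by ring
    rw [h1]
    have hcs : |A * dx + B * dy| ≤ Real.sqrt (A ^ 2 + B ^ 2) * Real.sqrt (dx ^ 2 + dy ^ 2) := by
      have h2 : (A * dx + B * dy) ^ 2 ≤ (A ^ 2 + B ^ 2) * (dx ^ 2 + dy ^ 2) := by
        nlinarith [sq_nonneg (A * dy - B * dx)]
      calc |A * dx + B * dy| = Real.sqrt ((A * dx + B * dy) ^ 2) := (Real.sqrt_sq_eq_abs _).symm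
        _ ≤ Real.sqrt ((A ^ 2 + B ^ 2) * (dx ^ 2 + dy ^ 2)) := Real.sqrt_le_sqrt h2
        _ = Real.sqrt (A ^ 2 + B ^ 2) * Real.sqrt (dx ^ 2 + dy ^ 2) :=
            Real.sqrt_mul (by positivity) _
    refine hcs.trans ?_
    exact mul_le_mul_of_nonneg_right (hLhh _ _) (Real.sqrt_nonneg _)
  have key := Convex.norm_image_sub_le_of_norm_deriv_le (f := φ) (s := Set.univ)
    (fun t _ => ((hφ' t).differentiableAt)) (fun t _ => by
      simpa [Real.norm_eq_abs] using hbound t)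
    convex_univ (Set.mem_univ (0 : ℝ)) (Set.mem_univ (1 : ℝ))
  have e1 : φ 1 = h x₁ * deriv h y₁ := by simp [hφ, hdx, hdy]
  have e0 : φ 0 = h x₂ * deriv h y₂ := by simp [hφ]
  simpa [e1, e0, Real.norm_eq_abs] using key
end

theorem stmt11 {d N : ℕ} (hN : 0 < N) (h : ℝ → ℝ)
    (hd1 : Differentiable ℝ h) (hd2 : Differentiable ℝ (deriv h))
    (M₀ M₁ M₂ Lhh : ℝ)
    (hb0 : ∀ x, |h x| ≤ M₀) (hb1 : ∀ x, |deriv h x| ≤ M₁)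
    (hb2 : ∀ x, |deriv (deriv h) x| ≤ M₂)
    (hLhh : ∀ x₁ x₂ : ℝ,
      Real.sqrt ((deriv h x₁ * deriv h x₂) ^ 2 + (h x₁ * deriv (deriv h) x₂) ^ 2) ≤ Lhh)
    (u : Fin N → Fin d → ℝ) (v : Fin N → ℝ) (θ : Fin d → ℝ)
    (W₁ W₂ : Matrix (Fin d) (Fin d) ℝ) :
    frobNorm (gradW h u v W₁ θ - gradW h u v W₂ θ) ≤
      ((1 : ℝ) / N) * (⨆ j, |θ j|) *
        (M₂ * ∑ i, (vecNorm (u i)) ^ 2 * |v i| +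
          Real.sqrt (2 * d) * Lhh * vecNorm θ * ∑ i, (vecNorm (u i)) ^ 2) *
        frobNorm (W₁ - W₂) := by
  rcases Nat.eq_zero_or_pos d with rfl | hd
  · simp [frobNorm]
  have hdne : Nonempty (Fin d) := ⟨⟨0, hd⟩⟩
  have hM₂ : 0 ≤ M₂ := le_trans (abs_nonneg _) (hb2 0)
  have hLnn : 0 ≤ Lhh := le_trans (Real.sqrt_nonneg _) (hLhh 0 0)
  set T := ⨆ j, |θ j| with hT
  have hTle : ∀ j, |θ j| ≤ T := fun j => le_ciSup (f := fun j => |θ j|) (Finite.bddAbove_range _) j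
  have hTnn : 0 ≤ T := le_trans (abs_nonneg _) (hTle ⟨0, hd⟩)
  set F := frobNorm (W₁ - W₂) with hF
  have hFnn : 0 ≤ F := Real.sqrt_nonneg _
  -- abbreviations
  set c : Fin N → Fin d → ℝ := fun i j =>
    (v i - ∑ j', θ j' * h ((W₁ *ᵥ u i) j')) * deriv h ((W₁ *ᵥ u i) j) -
    (v i - ∑ j', θ j' * h ((W₂ *ᵥ u i) j')) * deriv h ((W₂ *ᵥ u i) j) with hc
  set δ : Fin N → Fin d → ℝ := fun i j => (W₁ *ᵥ u i) j - (W₂ *ᵥ u i) j with hδdef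
  set S : Fin N → ℝ := fun i => ∑ j, (δ i j) ^ 2 with hS
  have hSnn : ∀ i, 0 ≤ S i := fun i => Finset.sum_nonneg fun j _ => sq_nonneg _
  have hδmat : ∀ i j, δ i j = ∑ k, (W₁ - W₂) j k * u i k := by
    intro i j
    simp only [hδdef, Matrix.mulVec, dotProduct, Matrix.sub_apply, sub_mul,
      Finset.sum_sub_distrib]
  -- K1
  have hK1 : ∀ i, Real.sqrt (S i) ≤ F * vecNorm (u i) := by
    intro i
    have h1 : S i ≤ (∑ j, ∑ k, ((W₁ - W₂) j k) ^ 2) * (∑ k, (u i k) ^ 2) := by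
      rw [Finset.sum_mul]
      refine Finset.sum_le_sum fun j _ => ?_
      rw [hδmat i j]
      exact Finset.sum_mul_sq_le_sq_mul_sq _ _ _
    calc Real.sqrt (S i) ≤ Real.sqrt ((∑ j, ∑ k, ((W₁ - W₂) j k) ^ 2) * (∑ k, (u i k) ^ 2)) :=
          Real.sqrt_le_sqrt h1
      _ = F * vecNorm (u i) := by
          rw [Real.sqrt_mul (by positivity)]; rfl
  -- pointwise bound on c
  have hLip1 := lip_h' h hd2 M₂ hb2
  have hLip2 := lip_H h hd1 hd2 Lhh hLhh
  have hcpt : ∀ i j, |c i j| ≤ M₂ * |v i| * |δ i j| +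
      Lhh * vecNorm θ * Real.sqrt (S i + d * (δ i j) ^ 2) := by
    intro i j
    have hid : c i j = v i * (deriv h ((W₁ *ᵥ u i) j) - deriv h ((W₂ *ᵥ u i) j)) -
        ∑ j', θ j' * (h ((W₁ *ᵥ u i) j') * deriv h ((W₁ *ᵥ u i) j) -
          h ((W₂ *ᵥ u i) j') * deriv h ((W₂ *ᵥ u i) j)) := by
      simp only [hc, sub_mul, Finset.sum_mul, mul_sub, Finset.sum_sub_distrib, mul_assoc]
      ring
    have habs : |c i j| ≤ |v i| * (M₂ * |δ i j|) +
        ∑ j', |θ j'| * (Lhh * Real.sqrt ((δ i j') ^ 2 + (δ i j) ^ 2)) := by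
      rw [hid]
      refine (abs_sub _ _).trans (add_le_add ?_ ?_)
      · rw [abs_mul]
        exact mul_le_mul_of_nonneg_left (hLip1 _ _) (abs_nonneg _)
      · refine (Finset.abs_sum_le_sum_abs _ _).trans (Finset.sum_le_sum fun j' _ => ?_)
        rw [abs_mul]
        exact mul_le_mul_of_nonneg_left (hLip2 _ _ _ _) (abs_nonneg _)
    have hCS : ∑ j', |θ j'| * (Lhh * Real.sqrt ((δ i j') ^ 2 + (δ i j) ^ 2)) ≤
        Lhh * vecNorm θ * Real.sqrt (S i + d * (δ i j) ^ 2) := by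
      have h1 : ∑ j', |θ j'| * (Lhh * Real.sqrt ((δ i j') ^ 2 + (δ i j) ^ 2)) =
          Lhh * ∑ j', |θ j'| * Real.sqrt ((δ i j') ^ 2 + (δ i j) ^ 2) := by
        rw [Finset.mul_sum]; exact Finset.sum_congr rfl fun j' _ => by ring
      rw [h1]
      have h2 := Real.sum_mul_le_sqrt_mul_sqrt Finset.univ
        (fun j' => |θ j'|) (fun j' => Real.sqrt ((δ i j') ^ 2 + (δ i j) ^ 2))
      have h3 : ∑ j', |θ j'| ^ 2 = ∑ j', (θ j') ^ 2 := by
        exact Finset.sum_congr rfl fun j' _ => sq_abs _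
      have h4 : ∑ j', (Real.sqrt ((δ i j') ^ 2 + (δ i j) ^ 2)) ^ 2 = S i + d * (δ i j) ^ 2 := by
        have : ∀ j' : Fin d, (Real.sqrt ((δ i j') ^ 2 + (δ i j) ^ 2)) ^ 2 =
            (δ i j') ^ 2 + (δ i j) ^ 2 := fun j' => Real.sq_sqrt (by positivity)
        rw [Finset.sum_congr rfl fun j' _ => this j', Finset.sum_add_distrib,
          Finset.sum_const, Finset.card_univ, Fintype.card_fin, nsmul_eq_mul, hS]
      rw [h3, h4] at h2
      calc Lhh * ∑ j', |θ j'| * Real.sqrt ((δ i j') ^ 2 + (δ i j) ^ 2)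
          ≤ Lhh * (Real.sqrt (∑ j', (θ j') ^ 2) * Real.sqrt (S i + d * (δ i j) ^ 2)) :=
            mul_le_mul_of_nonneg_left h2 hLnn
        _ = Lhh * vecNorm θ * Real.sqrt (S i + d * (δ i j) ^ 2) := by rw [vecNorm]; ring
    calc |c i j| ≤ |v i| * (M₂ * |δ i j|) +
        ∑ j', |θ j'| * (Lhh * Real.sqrt ((δ i j') ^ 2 + (δ i j) ^ 2)) := habs
      _ ≤ M₂ * |v i| * |δ i j| + Lhh * vecNorm θ * Real.sqrt (S i + d * (δ i j) ^ 2) := by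
          refine add_le_add (le_of_eq (by ring)) hCS
  -- K2 aggregate
  have hK2 : ∀ i, Real.sqrt (∑ j, (c i j) ^ 2) ≤
      (M₂ * |v i| + Real.sqrt (2 * (d : ℝ)) * Lhh * vecNorm θ) * Real.sqrt (S i) := by
    intro i
    set p := M₂ * |v i| with hp
    set q := Lhh * vecNorm θ with hq
    have hpnn : 0 ≤ p := mul_nonneg hM₂ (abs_nonneg _)
    have hqnn : 0 ≤ q := mul_nonneg hLnn (Real.sqrt_nonneg _)
    have h1 : ∑ j, (c i j) ^ 2 ≤
        ∑ j, (p * |δ i j| + q * Real.sqrt (S i + d * (δ i j) ^ 2)) ^ 2 := by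
      refine Finset.sum_le_sum fun j _ => ?_
      have hb := hcpt i j
      have hb' : |c i j| ≤ p * |δ i j| + q * Real.sqrt (S i + d * (δ i j) ^ 2) := by
        refine hb.trans (le_of_eq ?_); ring
      calc (c i j) ^ 2 = |c i j| ^ 2 := (sq_abs _).symm
        _ ≤ _ := pow_le_pow_left₀ (abs_nonneg _) hb' 2
    set x : Fin 2 → Fin d → ℝ :=
      ![fun j => p * |δ i j|, fun j => q * Real.sqrt (S i + d * (δ i j) ^ 2)] with hx
    have hxsum : ∀ j, (∑ t : Fin 2, x t j) =
        p * |δ i j| + q * Real.sqrt (S i + d * (δ i j) ^ 2) := by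
      intro j; rw [Fin.sum_univ_two]; simp [hx]
    have hm := minkowski_fin x
    have hm1 : Real.sqrt (∑ j, (∑ t : Fin 2, x t j) ^ 2) =
        Real.sqrt (∑ j, (p * |δ i j| + q * Real.sqrt (S i + d * (δ i j) ^ 2)) ^ 2) := by
      congr 1; exact Finset.sum_congr rfl fun j _ => by rw [hxsum j]
    have hA : Real.sqrt (∑ j, (x 0 j) ^ 2) = p * Real.sqrt (S i) := by
      have : ∑ j, (x 0 j) ^ 2 = p ^ 2 * S i := by
        simp only [hx, Matrix.cons_val_zero, mul_pow, sq_abs, ← Finset.mul_sum]; rfl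
      rw [this, Real.sqrt_mul (sq_nonneg p), Real.sqrt_sq hpnn]
    have hB : Real.sqrt (∑ j, (x 1 j) ^ 2) =
        q * (Real.sqrt (2 * (d : ℝ)) * Real.sqrt (S i)) := by
      have h4 : ∑ j, (x 1 j) ^ 2 = q ^ 2 * (2 * (d : ℝ) * S i) := by
        simp only [hx, Matrix.cons_val_one, Matrix.head_cons, Matrix.cons_val_zero, mul_pow, ← Finset.mul_sum]
        congr 1
        have h5 : ∀ j : Fin d, (Real.sqrt (S i + d * (δ i j) ^ 2)) ^ 2 =
            S i + d * (δ i j) ^ 2 := fun j => Real.sq_sqrt (by positivity)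
        rw [Finset.sum_congr rfl fun j _ => h5 j, Finset.sum_add_distrib, Finset.sum_const,
          Finset.card_univ, Fintype.card_fin, nsmul_eq_mul, ← Finset.mul_sum]
        have hSi : ∑ j, (δ i j) ^ 2 = S i := rfl
        rw [hSi]; ring
      rw [h4, Real.sqrt_mul (sq_nonneg q), Real.sqrt_sq hqnn,
        Real.sqrt_mul (by positivity : (0:ℝ) ≤ 2 * (d:ℝ))]
    have hm2 : ∑ t : Fin 2, Real.sqrt (∑ j, (x t j) ^ 2) =
        p * Real.sqrt (S i) + q * (Real.sqrt (2 * (d : ℝ)) * Real.sqrt (S i)) := by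
      rw [Fin.sum_univ_two, hA, hB]
    calc Real.sqrt (∑ j, (c i j) ^ 2)
        ≤ Real.sqrt (∑ j, (p * |δ i j| + q * Real.sqrt (S i + d * (δ i j) ^ 2)) ^ 2) :=
          Real.sqrt_le_sqrt h1
      _ = Real.sqrt (∑ j, (∑ t : Fin 2, x t j) ^ 2) := hm1.symm
      _ ≤ ∑ t : Fin 2, Real.sqrt (∑ j, (x t j) ^ 2) := hm
      _ = p * Real.sqrt (S i) + q * (Real.sqrt (2 * (d : ℝ)) * Real.sqrt (S i)) := hm2
      _ = (p + Real.sqrt (2 * (d : ℝ)) * Lhh * vecNorm θ) * Real.sqrt (S i) := by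
          rw [hq]; ring
  -- entry formula
  have hE : ∀ j k, (gradW h u v W₁ θ - gradW h u v W₂ θ) j k =
      (-(1 : ℝ) / N) * θ j * (∑ i, c i j * u i k) := by
    intro j k
    have h1 : (gradW h u v W₁ θ) j k - (gradW h u v W₂ θ) j k =
        (-(1 : ℝ) / N) * ∑ i, θ j * (c i j * u i k) := by
      simp only [gradW, Matrix.of_apply, ← mul_sub, ← Finset.sum_sub_distrib]
      congr 1
      refine Finset.sum_congr rfl fun i _ => ?_
      simp only [hc]; ring
    rw [Matrix.sub_apply, h1, ← Finset.mul_sum]; ring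
  -- bound on √(∑∑ g²)
  have hGbound : Real.sqrt (∑ j, ∑ k, (∑ i, c i j * u i k) ^ 2) ≤
      (M₂ * ∑ i, (vecNorm (u i)) ^ 2 * |v i| +
        Real.sqrt (2 * (d : ℝ)) * Lhh * vecNorm θ * ∑ i, (vecNorm (u i)) ^ 2) * F := by
    have hprod : ∑ j, ∑ k, (∑ i, c i j * u i k) ^ 2 =
        ∑ q : Fin d × Fin d, (∑ i, c i q.1 * u i q.2) ^ 2 := by
      rw [Fintype.sum_prod_type]
    have hm := minkowski_fin (fun i (q : Fin d × Fin d) => c i q.1 * u i q.2)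
    have hper : ∀ i, Real.sqrt (∑ q : Fin d × Fin d, (c i q.1 * u i q.2) ^ 2) ≤
        (M₂ * |v i| + Real.sqrt (2 * (d : ℝ)) * Lhh * vecNorm θ) *
          (F * (vecNorm (u i)) ^ 2) := by
      intro i
      have h6 : ∑ q : Fin d × Fin d, (c i q.1 * u i q.2) ^ 2 =
          (∑ j, (c i j) ^ 2) * (∑ k, (u i k) ^ 2) := by
        rw [Fintype.sum_prod_type, Finset.sum_mul_sum]
        exact Finset.sum_congr rfl fun j _ => Finset.sum_congr rfl fun k _ => by ring
      have h7 : Real.sqrt (∑ q : Fin d × Fin d, (c i q.1 * u i q.2) ^ 2) =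
          Real.sqrt (∑ j, (c i j) ^ 2) * vecNorm (u i) := by
        rw [h6, Real.sqrt_mul (by positivity)]; rfl
      rw [h7]
      have h8 : Real.sqrt (∑ j, (c i j) ^ 2) ≤
          (M₂ * |v i| + Real.sqrt (2 * (d : ℝ)) * Lhh * vecNorm θ) *
            (F * vecNorm (u i)) := by
        refine (hK2 i).trans ?_
        refine mul_le_mul_of_nonneg_left (hK1 i) ?_
        exact add_nonneg (mul_nonneg hM₂ (abs_nonneg _))
          (mul_nonneg (mul_nonneg (Real.sqrt_nonneg _) hLnn) (Real.sqrt_nonneg _))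
      calc Real.sqrt (∑ j, (c i j) ^ 2) * vecNorm (u i)
          ≤ ((M₂ * |v i| + Real.sqrt (2 * (d : ℝ)) * Lhh * vecNorm θ) *
              (F * vecNorm (u i))) * vecNorm (u i) :=
            mul_le_mul_of_nonneg_right h8 (Real.sqrt_nonneg _)
        _ = (M₂ * |v i| + Real.sqrt (2 * (d : ℝ)) * Lhh * vecNorm θ) *
              (F * (vecNorm (u i)) ^ 2) := by ring
    calc Real.sqrt (∑ j, ∑ k, (∑ i, c i j * u i k) ^ 2)
        = Real.sqrt (∑ q : Fin d × Fin d, (∑ i, c i q.1 * u i q.2) ^ 2) := by rw [hprod]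
      _ ≤ ∑ i, Real.sqrt (∑ q : Fin d × Fin d, (c i q.1 * u i q.2) ^ 2) := hm
      _ ≤ ∑ i, (M₂ * |v i| + Real.sqrt (2 * (d : ℝ)) * Lhh * vecNorm θ) *
            (F * (vecNorm (u i)) ^ 2) := Finset.sum_le_sum fun i _ => hper i
      _ = (M₂ * ∑ i, (vecNorm (u i)) ^ 2 * |v i| +
            Real.sqrt (2 * (d : ℝ)) * Lhh * vecNorm θ * ∑ i, (vecNorm (u i)) ^ 2) * F := by
          rw [Finset.sum_congr rfl (fun i (_ : i ∈ Finset.univ) =>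
            show (M₂ * |v i| + Real.sqrt (2 * (d : ℝ)) * Lhh * vecNorm θ) *
                (F * (vecNorm (u i)) ^ 2) =
              M₂ * ((vecNorm (u i)) ^ 2 * |v i|) * F +
                Real.sqrt (2 * (d : ℝ)) * Lhh * vecNorm θ * ((vecNorm (u i)) ^ 2) * F
              from by ring)]
          rw [Finset.sum_add_distrib]
          rw [← Finset.sum_mul, ← Finset.sum_mul, ← Finset.mul_sum, ← Finset.mul_sum]
          ring
  -- final assembly
  have hEsq : ∀ j k, ((gradW h u v W₁ θ - gradW h u v W₂ θ) j k) ^ 2 ≤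
      ((1 : ℝ) / N) ^ 2 * T ^ 2 * (∑ i, c i j * u i k) ^ 2 := by
    intro j k
    rw [hE j k]
    have h9 : ((-(1 : ℝ) / N) * θ j * (∑ i, c i j * u i k)) ^ 2 =
        ((1 : ℝ) / N) ^ 2 * (θ j) ^ 2 * (∑ i, c i j * u i k) ^ 2 := by ring
    rw [h9]
    have h10 : (θ j) ^ 2 ≤ T ^ 2 := by
      rw [← sq_abs (θ j)]
      exact pow_le_pow_left₀ (abs_nonneg _) (hTle j) 2
    have := mul_le_mul_of_nonneg_right
      (mul_le_mul_of_nonneg_left h10 (by positivity : (0:ℝ) ≤ ((1:ℝ)/N) ^ 2))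
      (sq_nonneg (∑ i, c i j * u i k))
    exact this
  have hfrob : frobNorm (gradW h u v W₁ θ - gradW h u v W₂ θ) ≤
      ((1 : ℝ) / N) * T * Real.sqrt (∑ j, ∑ k, (∑ i, c i j * u i k) ^ 2) := by
    rw [frobNorm]
    have h11 : ∑ j, ∑ k, ((gradW h u v W₁ θ - gradW h u v W₂ θ) j k) ^ 2 ≤
        ((1 : ℝ) / N) ^ 2 * T ^ 2 * (∑ j, ∑ k, (∑ i, c i j * u i k) ^ 2) := by
      rw [Finset.mul_sum]
      refine Finset.sum_le_sum fun j _ => ?_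
      rw [Finset.mul_sum]
      exact Finset.sum_le_sum fun k _ => hEsq j k
    refine (Real.sqrt_le_sqrt h11).trans (le_of_eq ?_)
    rw [show ((1:ℝ)/N) ^ 2 * T ^ 2 * (∑ j, ∑ k, (∑ i, c i j * u i k) ^ 2) =
        (((1:ℝ)/N) * T) ^ 2 * (∑ j, ∑ k, (∑ i, c i j * u i k) ^ 2) from by ring,
      Real.sqrt_mul (sq_nonneg _), Real.sqrt_sq (by positivity)]
  calc frobNorm (gradW h u v W₁ θ - gradW h u v W₂ θ)
      ≤ ((1 : ℝ) / N) * T * Real.sqrt (∑ j, ∑ k, (∑ i, c i j * u i k) ^ 2) := hfrob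
    _ ≤ ((1 : ℝ) / N) * T *
          ((M₂ * ∑ i, (vecNorm (u i)) ^ 2 * |v i| +
            Real.sqrt (2 * (d : ℝ)) * Lhh * vecNorm θ * ∑ i, (vecNorm (u i)) ^ 2) * F) :=
        mul_le_mul_of_nonneg_left hGbound (mul_nonneg (by positivity) hTnn)
    _ = ((1 : ℝ) / N) * T *
          (M₂ * ∑ i, (vecNorm (u i)) ^ 2 * |v i| +
            Real.sqrt (2 * (d : ℝ)) * Lhh * vecNorm θ * ∑ i, (vecNorm (u i)) ^ 2) * F := by
        ring
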